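/- Each of the following 56×56 real matrices M satisfies the infinitesimal symplectic condition Mᵀ Ω + Ω M = 0, where Ω = [[0, −I_28],[I_28, 0]]: (i) h_D for every traceless real diagonal 8×8 matrix D; (ii) the 56×56 extension of A_{kl} for every k < l; (iii) the 56×56 extension of S_{kl} for every k < l; (iv) λ_I for every tetra-index I. Equivalently, each such matrix has the block form [[A, B],[C, −Aᵀ]] with B and C symmetric 28×28 matrices, and hence lies in 𝔰𝔭(56, ℝ). -/

import Mathlib

open Matrix

/-- Index set for the 28-dimensional space `Λ²(ℝ⁸)`: ordered pairs `i < j` in `Fin 8`. -/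
abbrev PairIdx : Type := {p : Fin 8 × Fin 8 // p.1 < p.2}

/-- Index set for the 56-dimensional space `W = Λ²V ⊕ Λ²(V*)`. -/
abbrev WIdx : Type := PairIdx ⊕ PairIdx

/-- The action of an `8×8` matrix `M` on `Λ²V`, `M(eᵢ ∧ eⱼ) = (M eᵢ) ∧ eⱼ + eᵢ ∧ (M eⱼ)`,
written as a `28×28` matrix in the basis `{e_{ij}}_{i<j}`. -/
def lam2 (M : Matrix (Fin 8) (Fin 8) ℝ) : Matrix PairIdx PairIdx ℝ :=
  Matrix.of fun a b =>
    M a.1.1 b.1.1 * (if a.1.2 = b.1.2 then 1 else 0)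
    - M a.1.2 b.1.1 * (if a.1.1 = b.1.2 then 1 else 0)
    + M a.1.2 b.1.2 * (if a.1.1 = b.1.1 then 1 else 0)
    - M a.1.1 b.1.2 * (if a.1.2 = b.1.1 then 1 else 0)

/-- The `56×56` extension of an `8×8` matrix `M` to `W = Λ²V ⊕ Λ²(V*)`:
it acts on `Λ²V` as `lam2 M` and on `Λ²(V*)` by minus the transpose of this action. -/
def extW (M : Matrix (Fin 8) (Fin 8) ℝ) : Matrix WIdx WIdx ℝ :=
  Matrix.fromBlocks (lam2 M) 0 0 (-(lam2 M)ᵀ)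

/-- The antisymmetric `8×8` matrix `A_{kl} eᵢ = δ_{li} e_k − δ_{ki} e_l`. -/
def Amat (k l : Fin 8) : Matrix (Fin 8) (Fin 8) ℝ :=
  Matrix.of fun a b => (if a = k ∧ b = l then 1 else 0) - (if a = l ∧ b = k then 1 else 0)

/-- The symmetric `8×8` matrix `S_{kl} eᵢ = δ_{li} e_k + δ_{ki} e_l`. -/
def Smat (k l : Fin 8) : Matrix (Fin 8) (Fin 8) ℝ :=
  Matrix.of fun a b => (if a = k ∧ b = l then 1 else 0) + (if a = l ∧ b = k then 1 else 0)

/-- `J⁺_{kl} = (S_{kl} + A_{kl})/√2` as a `56×56` matrix. -/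
noncomputable def Jplus (k l : Fin 8) : Matrix WIdx WIdx ℝ :=
  (Real.sqrt 2)⁻¹ • (extW (Smat k l) + extW (Amat k l))

/-- `J⁻_{kl} = (S_{kl} − A_{kl})/√2` as a `56×56` matrix. -/
noncomputable def Jminus (k l : Fin 8) : Matrix WIdx WIdx ℝ :=
  (Real.sqrt 2)⁻¹ • (extW (Smat k l) - extW (Amat k l))

/-- `h_D` for a diagonal matrix `D = diag d`: acts by `(dᵢ + dⱼ)` on `e_{ij}` and
`−(dᵢ + dⱼ)` on `ε^{ij}`. -/
def hD (d : Fin 8 → ℝ) : Matrix WIdx WIdx ℝ := extW (Matrix.diagonal d)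

/-- Tetra-indices: strictly increasing 4-tuples in `{1,…,8}`. -/
abbrev TetraIdx : Type := {f : Fin 4 → Fin 8 // StrictMono f}

/-- The 8-index Levi-Civita symbol. -/
noncomputable def levi (f : Fin 8 → Fin 8) : ℝ :=
  if h : Function.Bijective f then ((Equiv.Perm.sign (Equiv.ofBijective f h) : ℤ) : ℝ) else 0

/-- The rank-4 generalized Kronecker delta `δ^{j₁j₂j₃j₄}_{i₁i₂i₃i₄}`. -/
noncomputable def gdelta (i j : Fin 4 → Fin 8) : ℝ :=
  ∑ σ : Equiv.Perm (Fin 4),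
    ((Equiv.Perm.sign σ : ℤ) : ℝ) * ∏ t : Fin 4, (if j t = i (σ t) then 1 else 0)

/-- `ε_{i₁i₂i₃i₄ a₁a₂ b₁b₂}` for a tetra-index `I` and pair indices `a`, `b`. -/
noncomputable def leviI (I : TetraIdx) (a b : PairIdx) : ℝ :=
  levi ![I.val 0, I.val 1, I.val 2, I.val 3, a.1.1, a.1.2, b.1.1, b.1.2]

/-- `δ^{a₁ a₂ b₁ b₂}_{i₁i₂i₃i₄}` for a tetra-index `I` and pair indices `a`, `b`. -/
noncomputable def gdeltaI (I : TetraIdx) (a b : PairIdx) : ℝ :=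
  gdelta I.val ![a.1.1, a.1.2, b.1.1, b.1.2]

/-- The `56×56` matrix `λ_I`: block off-diagonal w.r.t. `W = Λ²V ⊕ Λ²(V*)`, with
`λ_I(e_{j₁j₂}) = ∑_{k₁<k₂} ε_{I j₁j₂k₁k₂} ε^{k₁k₂}` and
`λ_I(ε^{j₁j₂}) = ∑_{k₁<k₂} δ^{j₁j₂k₁k₂}_I e_{k₁k₂}`. -/
noncomputable def lamT (I : TetraIdx) : Matrix WIdx WIdx ℝ :=
  Matrix.fromBlocks 0 (Matrix.of fun K J => gdeltaI I J K) (Matrix.of fun K J => leviI I J K) 0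

/-- The symplectic metric `Ω`. -/
def OmegaW : Matrix WIdx WIdx ℝ :=
  Matrix.fromBlocks 0 (-1) 1 0

/-- The pair index `(1,2)` (i.e. `(0,1)` in 0-based indexing). -/
def pair01 : PairIdx := ⟨(0, 1), by decide⟩

/-- Each of the following `56×56` matrices `M` satisfies the
infinitesimal symplectic condition `Mᵀ Ω + Ω M = 0` with `Ω = [[0, −I₂₈],[I₂₈, 0]]`:
(i) `h_D` for every traceless real diagonal `D`; (ii) the extension of `A_{kl}` for `k < l`;
(iii) the extension of `S_{kl}` for `k < l`; (iv) `λ_I` for every tetra-index `I`.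
Hence all of them lie in `𝔰𝔭(56, ℝ)`. -/

lemma extW_cond (M : Matrix (Fin 8) (Fin 8) ℝ) :
    (extW M)ᵀ * OmegaW + OmegaW * extW M = 0 := by
  rw [extW, OmegaW, Matrix.fromBlocks_transpose, Matrix.fromBlocks_multiply,
    Matrix.fromBlocks_multiply, Matrix.fromBlocks_add]
  simp

lemma levi_comp (f : Fin 8 → Fin 8) (σ : Equiv.Perm (Fin 8)) :
    levi (f ∘ σ) = ((Equiv.Perm.sign σ : ℤ) : ℝ) * levi f := by
  by_cases h : Function.Bijective f
  · have h2 : Function.Bijective (f ∘ σ) := h.comp σ.bijective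
    have key : Equiv.ofBijective (f ∘ σ) h2 = (Equiv.ofBijective f h) * σ := by
      ext x; rfl
    rw [levi, levi, dif_pos h, dif_pos h2, key, Equiv.Perm.sign_mul]
    push_cast
    ring
  · have h2 : ¬ Function.Bijective (f ∘ σ) := by
      intro hc
      have : f = (f ∘ σ) ∘ σ.symm := by ext x; simp
      rw [this] at h
      exact h (hc.comp σ.symm.bijective)
    rw [levi, levi, dif_neg h, dif_neg h2, mul_zero]

lemma gdelta_comp (i j : Fin 4 → Fin 8) (σ : Equiv.Perm (Fin 4)) :
    gdelta i (j ∘ σ) = ((Equiv.Perm.sign σ : ℤ) : ℝ) * gdelta i j := by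
  unfold gdelta
  rw [Finset.mul_sum]
  rw [← Equiv.sum_comp (Equiv.mulRight σ) _]
  refine Finset.sum_congr rfl fun τ _ => ?_
  simp only [Equiv.coe_mulRight]
  have hprod : (∏ t : Fin 4, (if (j ∘ σ) t = i ((τ * σ) t) then (1:ℝ) else 0))
      = ∏ t : Fin 4, (if j t = i (τ t) then (1:ℝ) else 0) := by
    rw [← Equiv.prod_comp σ (fun t => if j t = i (τ t) then (1:ℝ) else 0)]
    rfl
  erw [hprod, Equiv.Perm.sign_mul]
  push_cast
  ring

def sig8 : Equiv.Perm (Fin 8) := Equiv.swap 4 6 * Equiv.swap 5 7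

def sig4 : Equiv.Perm (Fin 4) := Equiv.swap 0 2 * Equiv.swap 1 3

lemma sign_sig8 : Equiv.Perm.sign sig8 = 1 := by
  rw [sig8, Equiv.Perm.sign_mul, Equiv.Perm.sign_swap (by decide),
    Equiv.Perm.sign_swap (by decide)]
  decide

lemma sign_sig4 : Equiv.Perm.sign sig4 = 1 := by
  rw [sig4, Equiv.Perm.sign_mul, Equiv.Perm.sign_swap (by decide),
    Equiv.Perm.sign_swap (by decide)]
  decide

lemma leviI_symm (I : TetraIdx) (a b : PairIdx) : leviI I a b = leviI I b a := by
  have h : (![I.val 0, I.val 1, I.val 2, I.val 3, a.1.1, a.1.2, b.1.1, b.1.2] ∘ sig8)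
      = ![I.val 0, I.val 1, I.val 2, I.val 3, b.1.1, b.1.2, a.1.1, a.1.2] := by
    funext t; fin_cases t <;> rfl
  unfold leviI
  rw [← h, levi_comp, sign_sig8]
  norm_num

lemma gdeltaI_symm (I : TetraIdx) (a b : PairIdx) : gdeltaI I a b = gdeltaI I b a := by
  have h : (![a.1.1, a.1.2, b.1.1, b.1.2] ∘ sig4)
      = ![b.1.1, b.1.2, a.1.1, a.1.2] := by
    funext t; fin_cases t <;> rfl
  unfold gdeltaI
  rw [← h, gdelta_comp, sign_sig4]
  norm_num

/-- Each of the following `56×56` matrices `M` satisfies the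
infinitesimal symplectic condition `Mᵀ Ω + Ω M = 0` with `Ω = [[0, −I₂₈],[I₂₈, 0]]`:
(i) `h_D` for every traceless real diagonal `D`; (ii) the extension of `A_{kl}` for `k < l`;
(iii) the extension of `S_{kl}` for `k < l`; (iv) `λ_I` for every tetra-index `I`.
Hence all of them lie in `𝔰𝔭(56, ℝ)`. -/

theorem generators_infinitesimally_symplectic :
    (∀ d : Fin 8 → ℝ, (∑ i, d i = 0) → (hD d)ᵀ * OmegaW + OmegaW * hD d = 0) ∧
    (∀ k l : Fin 8, k < l → (extW (Amat k l))ᵀ * OmegaW + OmegaW * extW (Amat k l) = 0) ∧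
    (∀ k l : Fin 8, k < l → (extW (Smat k l))ᵀ * OmegaW + OmegaW * extW (Smat k l) = 0) ∧
    (∀ I : TetraIdx, (lamT I)ᵀ * OmegaW + OmegaW * lamT I = 0) := by
  refine ⟨fun d _ => extW_cond _, fun k l _ => extW_cond _, fun k l _ => extW_cond _, fun I => ?_⟩
  have hC : (Matrix.of fun K J => leviI I J K)ᵀ = (Matrix.of fun K J => leviI I J K) := by
    ext a b; exact leviI_symm I a b
  have hB : (Matrix.of fun K J => gdeltaI I J K)ᵀ = (Matrix.of fun K J => gdeltaI I J K) := by
    ext a b; exact gdeltaI_symm I a b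
  rw [lamT, OmegaW, Matrix.fromBlocks_transpose, Matrix.fromBlocks_multiply,
    Matrix.fromBlocks_multiply, Matrix.fromBlocks_add, hB, hC]
  simp
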